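/- Let F_q be a finite field of characteristic p ≥ 5, and for α, λ ∈ F_q define b_{λ,α} = q^{-1/2}(ω_p^{tr((k+α)³ + λ(k+α))})_{k ∈ F_q}. Then for each fixed α, the set B_α = {b_{λ,α} : λ ∈ F_q} is an orthonormal basis of ℂ^q. -/

import Mathlib

open scoped InnerProductSpace

/-- The Alltop vector `b_{λ,α} = q^{-1/2} (ω_p^{tr((k+α)³ + λ(k+α))})_{k ∈ F_q}`,
where `ω_p = exp(2πi/p)` and `tr` is the absolute trace from `F_q` to `F_p`. -/
noncomputable def alltop (p : ℕ) (F : Type) [Field F] [Fintype F] [Algebra (ZMod p) F]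
    (lam alpha : F) : EuclideanSpace ℂ F :=
  WithLp.toLp 2 fun k => (1 / Real.sqrt (Fintype.card F) : ℂ) *
    Complex.exp (2 * Real.pi * Complex.I *
      (ZMod.val (Algebra.trace (ZMod p) F ((k + alpha) ^ 3 + lam * (k + alpha))) : ℂ) / p)

/-- For `F_q` of characteristic `p ≥ 5` and each fixed `α`, the set
`B_α = {b_{λ,α} : λ ∈ F_q}` is an orthonormal basis of `ℂ^q`. -/
theorem alltop_orthonormal_basis (p : ℕ) [Fact p.Prime] (hp : 5 ≤ p)
    (F : Type) [Field F] [Fintype F] [Algebra (ZMod p) F] (alpha : F) :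
    ∃ B : OrthonormalBasis F ℂ (EuclideanSpace ℂ F),
      ∀ lam : F, B lam = alltop p F lam alpha := by
  classical
  haveI : NeZero p := ⟨(Fact.out : p.Prime).ne_zero⟩
  haveI : Module.Finite (ZMod p) F := Module.finite_iff_finite.mpr inferInstance
  haveI : Algebra.IsAlgebraic (ZMod p) F := Algebra.IsAlgebraic.of_finite _ _
  set q := Fintype.card F with hq
  have hq0 : (0 : ℝ) < q := by exact_mod_cast Fintype.card_pos
  -- the additive character
  set ψ : AddChar F ℂ :=
    (ZMod.stdAddChar (N := p)).compAddMonoidHom (Algebra.trace (ZMod p) F).toAddMonoidHom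
    with hψ
  have hψdef : ∀ x : F, ψ x = Complex.exp (2 * Real.pi * Complex.I *
      (ZMod.val (Algebra.trace (ZMod p) F x) : ℂ) / p) := by
    intro x
    rw [hψ, AddChar.compAddMonoidHom_apply, LinearMap.toAddMonoidHom_coe,
      ZMod.stdAddChar_apply, ZMod.toCircle_apply]
  have halltop : ∀ lam k, alltop p F lam alpha k =
      (1 / Real.sqrt q : ℂ) * ψ ((k + alpha) ^ 3 + lam * (k + alpha)) := by
    intro lam k
    rw [hψdef]
    rfl
  have hconj : ∀ x : F, (starRingEnd ℂ) (ψ x) = ψ (-x) := by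
    intro x
    have h1 : (Algebra.trace (ZMod p) F).toAddMonoidHom (-x) =
        -((Algebra.trace (ZMod p) F).toAddMonoidHom x) := map_neg _ x
    rw [hψ, AddChar.compAddMonoidHom_apply, AddChar.compAddMonoidHom_apply, h1,
      ZMod.stdAddChar_apply, ZMod.stdAddChar_apply, AddChar.map_neg_eq_inv,
      Circle.coe_inv_eq_conj]
  have key : ∀ lam mu : F,
      ⟪alltop p F lam alpha, alltop p F mu alpha⟫_ℂ = if lam = mu then 1 else 0 := by
    intro lam mu
    have : ⟪alltop p F lam alpha, alltop p F mu alpha⟫_ℂ =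
        (1 / (q : ℂ)) * ∑ j : F, ψ ((mu - lam) * j) := by
      rw [PiLp.inner_apply]
      have hsum : ∀ k : F, ⟪alltop p F lam alpha k, alltop p F mu alpha k⟫_ℂ =
          (1 / (q : ℂ)) * ψ ((mu - lam) * (k + alpha)) := by
        intro k
        rw [RCLike.inner_apply, halltop, halltop, map_mul, hconj]
        have h1 : (starRingEnd ℂ) (1 / Real.sqrt q : ℂ) = (1 / Real.sqrt q : ℂ) := by
          rw [map_div₀, map_one, Complex.conj_ofReal]
        rw [h1]
        have h2 : ψ (-((k + alpha) ^ 3 + lam * (k + alpha))) *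
            ψ ((k + alpha) ^ 3 + mu * (k + alpha)) = ψ ((mu - lam) * (k + alpha)) := by
          rw [← AddChar.map_add_eq_mul]
          congr 1
          ring
        have h3 : ((1 / Real.sqrt q : ℂ)) * (1 / Real.sqrt q : ℂ) = 1 / (q : ℂ) := by
          rw [div_mul_div_comm, one_mul, ← Complex.ofReal_mul,
            Real.mul_self_sqrt hq0.le, Complex.ofReal_natCast]
        calc (1 / Real.sqrt q : ℂ) * ψ ((k + alpha) ^ 3 + mu * (k + alpha)) *
              ((1 / Real.sqrt q : ℂ) * ψ (-((k + alpha) ^ 3 + lam * (k + alpha))))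
            = ((1 / Real.sqrt q : ℂ) * (1 / Real.sqrt q : ℂ)) *
              (ψ (-((k + alpha) ^ 3 + lam * (k + alpha))) *
               ψ ((k + alpha) ^ 3 + mu * (k + alpha))) := by ring
          _ = (1 / (q : ℂ)) * ψ ((mu - lam) * (k + alpha)) := by rw [h2, h3]
      rw [Finset.sum_congr rfl fun k _ => hsum k, ← Finset.mul_sum]
      congr 1
      exact Equiv.sum_comp (Equiv.addRight alpha) (fun j => ψ ((mu - lam) * j))
    rw [this]
    by_cases hlm : lam = mu
    · subst hlm
      rw [if_pos rfl]
      simp only [sub_self, zero_mul, AddChar.map_zero_eq_one]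
      rw [Finset.sum_const, Finset.card_univ, nsmul_eq_mul, mul_one, one_div,
        inv_mul_cancel₀]
      exact Nat.cast_ne_zero.mpr Fintype.card_ne_zero
    · rw [if_neg hlm]
      have hd : mu - lam ≠ 0 := sub_ne_zero.mpr (Ne.symm hlm)
      set φ : AddChar F ℂ := ψ.compAddMonoidHom (AddMonoidHom.mulLeft (mu - lam)) with hφ
      have hsumφ : ∑ j : F, ψ ((mu - lam) * j) = ∑ j : F, φ j := rfl
      rw [hsumφ, AddChar.sum_eq_zero_iff_ne_zero.mpr, mul_zero]
      -- φ ≠ 0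
      obtain ⟨b, hb⟩ : ∃ b : F, Algebra.trace (ZMod p) F ((mu - lam) * b) ≠ 0 := by
        by_contra h
        push_neg at h
        exact hd ((traceForm_nondegenerate (ZMod p) F).1 (mu - lam)
          (fun n => by rw [Algebra.traceForm_apply]; exact h n))
      refine AddChar.ne_zero_iff.mpr ⟨b, ?_⟩
      have : φ b = ZMod.stdAddChar (Algebra.trace (ZMod p) F ((mu - lam) * b)) := rfl
      rw [this]
      intro hcontra
      apply hb
      have := ZMod.injective_stdAddChar (N := p)
      have h0 : ZMod.stdAddChar (N := p) (0 : ZMod p) = 1 := AddChar.map_zero_eq_one _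
      exact this (hcontra.trans h0.symm)
  have horth : Orthonormal ℂ (fun lam : F => alltop p F lam alpha) :=
    orthonormal_iff_ite.mpr key
  have hcard : Fintype.card F = Module.finrank ℂ (EuclideanSpace ℂ F) := by
    rw [finrank_euclideanSpace]
  let b := basisOfOrthonormalOfCardEqFinrank horth hcard
  have hb : ⇑b = fun lam : F => alltop p F lam alpha :=
    coe_basisOfOrthonormalOfCardEqFinrank horth hcard
  refine ⟨b.toOrthonormalBasis (by rwa [hb]), fun lam => ?_⟩
  rw [Module.Basis.coe_toOrthonormalBasis, hb]
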